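/- Let α ∈ (1, 3/2) be a parameter such that the random symmetric doubling map R_α has strong random matching with matching exponent M = M_α + 1, and let p ∈ (0,1). If μ_p is the unique R_α-stationary probability measure absolutely continuous with respect to Lebesgue measure, with density f_p, then f_p is constant and equal to 1/α on the interval [1-α, α-1]. -/

import Mathlib

open MeasureTheory

/-- The symmetric doubling map `S_α`. -/
noncomputable def symDoubling (α : ℝ) (x : ℝ) : ℝ :=
  if x < -(1/2) then 2*x + α else if x ≤ 1/2 then 2*x else 2*x - α

/-- The condition `1/2 < S_α^n(1) < α - 1/2`; its satisfiability for some `m` is matching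
for `S_α`, which for the random symmetric doubling map `R_α` is equivalent to strong
random matching with exponent `M = M_α + 1`. -/
noncomputable def matchCond (α : ℝ) (n : ℕ) : Prop :=
  1/2 < (symDoubling α)^[n] 1 ∧ (symDoubling α)^[n] 1 < α - 1/2

/-- The two branches `T_{α,0}` (`j = false`) and `T_{α,1}` (`j = true`) of the random
symmetric doubling map. -/
noncomputable def randSymDoubling (α : ℝ) (j : Bool) (x : ℝ) : ℝ :=
  match j with
  | false => if x ≤ (1-α)/2 then 2*x + α else if x ≤ 1/2 then 2*x else 2*x - α
  | true  => if x < -(1/2) then 2*x + α else if x < (α-1)/2 then 2*x else 2*x - α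

set_option maxHeartbeats 2000000

open Set Filter
open scoped NNReal ENNReal

/-- Let `α ∈ (1,3/2)` be a strong random matching parameter (i.e. `S_α` has matching:
`1/2 < S_α^m(1) < α - 1/2` for some `m`, which gives strong random matching with
`M = M_α + 1`), and `p ∈ (0,1)`.  If `μ_p` is the unique stationary probability measure
of `R_α` that is absolutely continuous with respect to Lebesgue measure, with density
`f_p`, then `f_p` is constant equal to `1/α` on `[1-α, α-1]` (almost everywhere). -/
theorem stmt16 (α p : ℝ) (hα : α ∈ Set.Ioo (1:ℝ) (3/2)) (hp : p ∈ Set.Ioo (0:ℝ) 1)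
    (m : ℕ) (hm : matchCond α m)
    (μ : Measure ℝ) (hprob : IsProbabilityMeasure μ)
    (f : ℝ → ℝ)
    (hdens : ∀ B : Set ℝ, MeasurableSet B → μ B = ENNReal.ofReal (∫ x in B, f x))
    (hstat : ∀ B : Set ℝ, MeasurableSet B →
      μ B = ENNReal.ofReal p * μ (randSymDoubling α false ⁻¹' B)
          + ENNReal.ofReal (1-p) * μ (randSymDoubling α true ⁻¹' B))
    (huniq : ∀ ν : Measure ℝ, IsProbabilityMeasure ν → ν ≪ volume →
      (∀ B : Set ℝ, MeasurableSet B →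
        ν B = ENNReal.ofReal p * ν (randSymDoubling α false ⁻¹' B)
            + ENNReal.ofReal (1-p) * ν (randSymDoubling α true ⁻¹' B)) → ν = μ) :
    ∀ᵐ x ∂(volume.restrict (Set.Icc (1-α) (α-1))), f x = 1/α := by
  classical
  obtain ⟨hα1, hα2⟩ := hα
  obtain ⟨hp0, hp1⟩ := hp
  have hα0 : (0:ℝ) < α := by linarith
  have hα2' : α < 2 := by linarith
  haveI hFact : Fact (0 < α) := ⟨hα0⟩
  -- measurability of the two branches
  have hT0m : Measurable (randSymDoubling α false) := by
    unfold randSymDoubling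
    apply Measurable.ite (measurableSet_Iic (a := (1-α)/2))
    · exact (measurable_id.const_mul 2).add_const α
    · apply Measurable.ite (measurableSet_Iic (a := (1:ℝ)/2))
      · exact measurable_id.const_mul 2
      · exact (measurable_id.const_mul 2).sub_const α
  have hT1m : Measurable (randSymDoubling α true) := by
    unfold randSymDoubling
    apply Measurable.ite (measurableSet_Iio (a := -(1/2)))
    · exact (measurable_id.const_mul 2).add_const α
    · apply Measurable.ite (measurableSet_Iio (a := (α-1)/2))
      · exact measurable_id.const_mul 2
      · exact (measurable_id.const_mul 2).sub_const α
  -- absolute continuity and density facts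
  have hac : μ ≪ volume := by
    refine Measure.AbsolutelyContinuous.mk fun s hs h0 => ?_
    rw [hdens s hs, Measure.restrict_eq_zero.mpr h0, integral_zero_measure, ENNReal.ofReal_zero]
  have hfint : Integrable f volume := by
    by_contra h
    have := hdens Set.univ MeasurableSet.univ
    rw [measure_univ, Measure.restrict_univ, integral_undef h, ENNReal.ofReal_zero] at this
    exact one_ne_zero this
  have hsing : ∀ x : ℝ, μ {x} = 0 := fun x => hac (measure_singleton x)
  -- the density is a.e. nonnegative
  have hf0 : 0 ≤ᵐ[volume] f := by
    obtain ⟨g, hgm, hfg⟩ := hfint.aestronglyMeasurable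
    have hBm : MeasurableSet {x | g x < 0} := measurableSet_lt hgm.measurable measurable_const
    have hIB : ∫ x in {x | g x < 0}, f x = ∫ x in {x | g x < 0}, g x :=
      setIntegral_congr_ae hBm (hfg.mono fun x hx _ => hx)
    have ha : ∫ x in {x | g x < 0}, f x ≤ 0 := by
      rw [hIB]
      exact setIntegral_nonpos hBm fun x hx => le_of_lt hx
    have hofreal_one : ∀ r : ℝ, ENNReal.ofReal r = 1 → r = 1 := by
      intro r hr
      rcases le_or_gt r 0 with h | h
      · rw [ENNReal.ofReal_eq_zero.mpr h] at hr
        exact absurd hr (by simp)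
      · have := congrArg ENNReal.toReal hr
        rwa [ENNReal.toReal_ofReal h.le, ENNReal.toReal_one] at this
    have huniv : ∫ x, f x = 1 := by
      apply hofreal_one
      have h := hdens Set.univ MeasurableSet.univ
      rw [measure_univ, Measure.restrict_univ] at h
      exact h.symm
    have hBz : μ {x | g x < 0} = 0 := by
      rw [hdens _ hBm, ENNReal.ofReal_eq_zero]
      exact ha
    have hb1 : ∫ x in {x | g x < 0}ᶜ, f x = 1 := by
      apply hofreal_one
      have hsplit : μ {x | g x < 0} + μ {x | g x < 0}ᶜ = 1 := by
        rw [← measure_union disjoint_compl_right hBm.compl, Set.union_compl_self, measure_univ]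
      rw [hBz, zero_add] at hsplit
      rw [← hdens _ hBm.compl]
      exact hsplit
    have haz : ∫ x in {x | g x < 0}, g x = 0 := by
      have hcompl : (∫ x in {x | g x < 0}, f x) + ∫ x in {x | g x < 0}ᶜ, f x = ∫ x, f x :=
        integral_add_compl hBm hfint
      rw [← hIB]
      rw [hb1, huniv] at hcompl
      linarith
    have hBnull : volume {x | g x < 0} = 0 := by
      have hnn : 0 ≤ᵐ[volume.restrict {x | g x < 0}] fun x => -g x :=
        (ae_restrict_iff' hBm).mpr (Filter.Eventually.of_forall fun x hx => by
          simp only [Set.mem_setOf_eq] at hx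
          simp [le_of_lt hx])
      have hGint : IntegrableOn g {x | g x < 0} volume := by
        have hf' : IntegrableOn f {x | g x < 0} volume := hfint.integrableOn
        exact (integrable_congr (ae_restrict_of_ae hfg)).mp hf'
      have hz : ∫ x in {x | g x < 0}, (-g x) ∂volume = 0 := by
        rw [integral_neg, haz, neg_zero]
      have hae := (setIntegral_eq_zero_iff_of_nonneg_ae hnn hGint.neg).mp hz
      have hae' := (ae_restrict_iff' hBm).mp hae
      have h2 : ∀ᵐ x ∂volume, x ∉ {x | g x < 0} := by
        filter_upwards [hae'] with x hx
        intro hxB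
        have h3 := hx hxB
        have h4 : g x = 0 := by simpa using h3
        exact absurd h4 (ne_of_lt hxB)
      have h3 := ae_iff.mp h2
      simpa only [not_not, Set.mem_setOf_eq] using h3
    have hgnn : ∀ᵐ x ∂volume, 0 ≤ g x := by
      rw [ae_iff]
      have : {x : ℝ | ¬ 0 ≤ g x} = {x | g x < 0} := by
        ext x
        simp [not_le]
      rw [this]
      exact hBnull
    filter_upwards [hfg, hgnn] with x h1 h2
    rw [h1]
    exact h2
  have hμd : μ = volume.withDensity (fun x => ENNReal.ofReal (f x)) := by
    ext B hB
    rw [withDensity_apply _ hB, hdens B hB,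
      ofReal_integral_eq_lintegral_ofReal hfint.integrableOn (ae_restrict_of_ae hf0)]
  -- support of μ is contained in [-1,1]
  have hone : ENNReal.ofReal p + ENNReal.ofReal (1-p) = 1 := by
    rw [← ENNReal.ofReal_add hp0.le (by linarith)]
    norm_num
  have hpreR : ∀ (j : Bool) (t : ℝ), 1 ≤ t →
      randSymDoubling α j ⁻¹' Set.Ioi t = Set.Ioi ((t+α)/2) := by
    intro j t ht
    ext x
    cases j <;>
    · simp only [randSymDoubling, Set.mem_preimage, Set.mem_Ioi]
      split_ifs with h1 h2 <;> constructor <;> intro hx <;> linarith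
  have hpreL : ∀ (j : Bool) (u : ℝ), u ≤ -1 →
      randSymDoubling α j ⁻¹' Set.Iio u = Set.Iio ((u-α)/2) := by
    intro j u hu
    ext x
    cases j <;>
    · simp only [randSymDoubling, Set.mem_preimage, Set.mem_Iio]
      split_ifs with h1 h2 <;> constructor <;> intro hx <;> linarith
  have stepR : ∀ t : ℝ, 1 ≤ t → μ (Set.Ioi t) = μ (Set.Ioi ((t+α)/2)) := by
    intro t ht
    rw [hstat _ measurableSet_Ioi, hpreR false t ht, hpreR true t ht, ← add_mul, hone, one_mul]
  have stepL : ∀ u : ℝ, u ≤ -1 → μ (Set.Iio u) = μ (Set.Iio ((u-α)/2)) := by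
    intro u hu
    rw [hstat _ measurableSet_Iio, hpreL false u hu, hpreL true u hu, ← add_mul, hone, one_mul]
  have hsmall : ∀ {cc ε : ℝ}, 0 < cc → 0 < ε → ∃ n : ℕ, cc / 2^n < ε := by
    intro cc ε hcc hε
    obtain ⟨n, hn⟩ := exists_pow_lt_of_lt_one (div_pos hε hcc) (by norm_num : (1:ℝ)/2 < 1)
    refine ⟨n, ?_⟩
    have h2 := mul_lt_mul_of_pos_left hn hcc
    have hεcc : cc * (ε / cc) = ε := by field_simp
    rw [hεcc, one_div_pow, mul_one_div] at h2
    exact h2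
  -- far-right mass is constant
  have iterFarR : ∀ c : ℝ, 0 < c → ∀ n : ℕ, μ (Set.Ioi (α + c)) = μ (Set.Ioi (α + c / 2^n)) := by
    intro c hc n
    induction n with
    | zero => norm_num
    | succ n ih =>
        have hpos : (0:ℝ) < c / 2^n := div_pos hc (by positivity)
        rw [ih, stepR (α + c/2^n) (by linarith)]
        congr 1
        rw [show ((α + c/2^n) + α)/2 = α + c/2^(n+1) by ring]
  have hIoiFar : ∀ c : ℝ, 0 < c → μ (Set.Ioi (α + c)) = μ (Set.Ioi α) := by
    intro c hc
    have hmono : Monotone (fun n : ℕ => Set.Ioi (α + c / 2^n)) := by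
      intro a b hab x hx
      simp only [Set.mem_Ioi] at hx ⊢
      have h1 : (2:ℝ)^a ≤ 2^b := pow_le_pow_right₀ one_le_two hab
      have h2 : c / 2^b ≤ c / 2^a :=
        div_le_div_of_nonneg_left hc.le (by positivity) h1
      linarith
    have hU : Set.Ioi α = ⋃ n : ℕ, Set.Ioi (α + c / 2^n) := by
      ext x
      simp only [Set.mem_Ioi, Set.mem_iUnion]
      constructor
      · intro hx
        obtain ⟨n, hn⟩ := hsmall hc (show (0:ℝ) < x - α by linarith)
        exact ⟨n, by linarith⟩
      · rintro ⟨n, hn⟩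
        have : (0:ℝ) < c / 2^n := div_pos hc (by positivity)
        linarith
    have ht := tendsto_measure_iUnion_atTop (μ := μ) hmono
    rw [← hU] at ht
    have hconst : (μ ∘ fun n : ℕ => Set.Ioi (α + c / 2^n)) = fun _ => μ (Set.Ioi (α + c)) :=
      funext fun n => (iterFarR c hc n).symm
    rw [hconst] at ht
    exact tendsto_nhds_unique tendsto_const_nhds ht
  have hIoiA0 : μ (Set.Ioi α) = 0 := by
    have hA : ∀ n : ℕ, μ (Set.Ioi (α + ((n:ℝ)+1))) = μ (Set.Ioi α) :=
      fun n => hIoiFar ((n:ℝ)+1) (by positivity)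
    have hAnti : Antitone (fun n : ℕ => Set.Ioi (α + ((n:ℝ)+1))) := by
      intro a b hab x hx
      simp only [Set.mem_Ioi] at hx ⊢
      have : (a:ℝ) ≤ b := by exact_mod_cast hab
      linarith
    have hint : (⋂ n : ℕ, Set.Ioi (α + ((n:ℝ)+1))) = ∅ := by
      ext x
      simp only [Set.mem_iInter, Set.mem_Ioi, Set.mem_empty_iff_false, iff_false, not_forall]
      obtain ⟨n, hn⟩ := exists_nat_gt (x - α)
      exact ⟨n, by push_neg; linarith⟩
    have htd := tendsto_measure_iInter_atTop (μ := μ)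
      (fun n => measurableSet_Ioi.nullMeasurableSet) hAnti ⟨0, measure_ne_top μ _⟩
    rw [hint] at htd
    have hconst : (μ ∘ fun n : ℕ => Set.Ioi (α + ((n:ℝ)+1))) = fun _ => μ (Set.Ioi α) :=
      funext fun n => hA n
    rw [hconst, measure_empty] at htd
    exact tendsto_nhds_unique tendsto_const_nhds htd
  have hIciA0 : μ (Set.Ici α) = 0 := by
    have hsub : Set.Ici α ⊆ {α} ∪ Set.Ioi α := by
      intro x hx
      rcases eq_or_lt_of_le (Set.mem_Ici.mp hx) with h | h
      · exact Or.inl (by simp [h.symm])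
      · exact Or.inr h
    refine le_antisymm (le_trans (measure_mono hsub) ?_) zero_le
    refine le_trans (measure_union_le _ _) ?_
    rw [hsing α, hIoiA0, add_zero]
  have hIoi1 : μ (Set.Ioi (1:ℝ)) = 0 := by
    have iter2 : ∀ n : ℕ, μ (Set.Ioi (1:ℝ)) = μ (Set.Ioi (α - (α-1)/2^n)) := by
      intro n
      induction n with
      | zero => rw [show α - (α-1)/2^0 = (1:ℝ) by rw [pow_zero, div_one]; ring]
      | succ n ih =>
          have h1n : (1:ℝ) ≤ 2^n := one_le_pow₀ one_le_two
          have hle : (α-1)/2^n ≤ α - 1 := div_le_self (by linarith) h1n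
          rw [ih, stepR (α - (α-1)/2^n) (by linarith)]
          congr 1
          rw [show ((α - (α-1)/2^n) + α)/2 = α - (α-1)/2^(n+1) by ring]
    have hAnti : Antitone (fun n : ℕ => Set.Ioi (α - (α-1)/2^n)) := by
      intro a b hab x hx
      simp only [Set.mem_Ioi] at hx ⊢
      have h1 : (2:ℝ)^a ≤ 2^b := pow_le_pow_right₀ one_le_two hab
      have h2 : (α-1)/2^b ≤ (α-1)/2^a :=
        div_le_div_of_nonneg_left (by linarith) (by positivity) h1
      linarith
    have hint : (⋂ n : ℕ, Set.Ioi (α - (α-1)/2^n)) = Set.Ici α := by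
      ext x
      simp only [Set.mem_iInter, Set.mem_Ioi, Set.mem_Ici]
      constructor
      · intro hx
        by_contra hlt
        push_neg at hlt
        obtain ⟨n, hn⟩ := hsmall (show (0:ℝ) < α - 1 by linarith) (show (0:ℝ) < α - x by linarith)
        have := hx n
        linarith
      · intro hx n
        have : (0:ℝ) < (α-1)/2^n := div_pos (by linarith) (by positivity)
        linarith
    have htd := tendsto_measure_iInter_atTop (μ := μ)
      (fun n => measurableSet_Ioi.nullMeasurableSet) hAnti ⟨0, measure_ne_top μ _⟩
    rw [hint] at htd
    have hconst : (μ ∘ fun n : ℕ => Set.Ioi (α - (α-1)/2^n)) = fun _ => μ (Set.Ioi (1:ℝ)) :=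
      funext fun n => (iter2 n).symm
    rw [hconst, hIciA0] at htd
    exact tendsto_nhds_unique tendsto_const_nhds htd
  -- left side, mirrored
  have iterFarL : ∀ c : ℝ, 0 < c → ∀ n : ℕ, μ (Set.Iio (-α - c)) = μ (Set.Iio (-α - c / 2^n)) := by
    intro c hc n
    induction n with
    | zero => norm_num
    | succ n ih =>
        have hpos : (0:ℝ) < c / 2^n := div_pos hc (by positivity)
        rw [ih, stepL (-α - c/2^n) (by linarith)]
        congr 1
        rw [show ((-α - c/2^n) - α)/2 = -α - c/2^(n+1) by ring]
  have hIioFar : ∀ c : ℝ, 0 < c → μ (Set.Iio (-α - c)) = μ (Set.Iio (-α)) := by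
    intro c hc
    have hmono : Monotone (fun n : ℕ => Set.Iio (-α - c / 2^n)) := by
      intro a b hab x hx
      simp only [Set.mem_Iio] at hx ⊢
      have h1 : (2:ℝ)^a ≤ 2^b := pow_le_pow_right₀ one_le_two hab
      have h2 : c / 2^b ≤ c / 2^a :=
        div_le_div_of_nonneg_left hc.le (by positivity) h1
      linarith
    have hU : Set.Iio (-α) = ⋃ n : ℕ, Set.Iio (-α - c / 2^n) := by
      ext x
      simp only [Set.mem_Iio, Set.mem_iUnion]
      constructor
      · intro hx
        obtain ⟨n, hn⟩ := hsmall hc (show (0:ℝ) < -α - x by linarith)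
        exact ⟨n, by linarith⟩
      · rintro ⟨n, hn⟩
        have : (0:ℝ) < c / 2^n := div_pos hc (by positivity)
        linarith
    have ht := tendsto_measure_iUnion_atTop (μ := μ) hmono
    rw [← hU] at ht
    have hconst : (μ ∘ fun n : ℕ => Set.Iio (-α - c / 2^n)) = fun _ => μ (Set.Iio (-α - c)) :=
      funext fun n => (iterFarL c hc n).symm
    rw [hconst] at ht
    exact tendsto_nhds_unique tendsto_const_nhds ht
  have hIioA0 : μ (Set.Iio (-α)) = 0 := by
    have hA : ∀ n : ℕ, μ (Set.Iio (-α - ((n:ℝ)+1))) = μ (Set.Iio (-α)) :=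
      fun n => hIioFar ((n:ℝ)+1) (by positivity)
    have hAnti : Antitone (fun n : ℕ => Set.Iio (-α - ((n:ℝ)+1))) := by
      intro a b hab x hx
      simp only [Set.mem_Iio] at hx ⊢
      have : (a:ℝ) ≤ b := by exact_mod_cast hab
      linarith
    have hint : (⋂ n : ℕ, Set.Iio (-α - ((n:ℝ)+1))) = ∅ := by
      ext x
      simp only [Set.mem_iInter, Set.mem_Iio, Set.mem_empty_iff_false, iff_false, not_forall]
      obtain ⟨n, hn⟩ := exists_nat_gt (-α - x)
      exact ⟨n, by push_neg; linarith⟩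
    have htd := tendsto_measure_iInter_atTop (μ := μ)
      (fun n => measurableSet_Iio.nullMeasurableSet) hAnti ⟨0, measure_ne_top μ _⟩
    rw [hint] at htd
    have hconst : (μ ∘ fun n : ℕ => Set.Iio (-α - ((n:ℝ)+1))) = fun _ => μ (Set.Iio (-α)) :=
      funext fun n => hA n
    rw [hconst, measure_empty] at htd
    exact tendsto_nhds_unique tendsto_const_nhds htd
  have hIicA0 : μ (Set.Iic (-α)) = 0 := by
    have hsub : Set.Iic (-α) ⊆ {-α} ∪ Set.Iio (-α) := by
      intro x hx
      rcases eq_or_lt_of_le (Set.mem_Iic.mp hx) with h | h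
      · exact Or.inl (by simp [h])
      · exact Or.inr h
    refine le_antisymm (le_trans (measure_mono hsub) ?_) zero_le
    refine le_trans (measure_union_le _ _) ?_
    rw [hsing (-α), hIioA0, add_zero]
  have hIio1 : μ (Set.Iio (-1:ℝ)) = 0 := by
    have iter2 : ∀ n : ℕ, μ (Set.Iio (-1:ℝ)) = μ (Set.Iio (-α + (α-1)/2^n)) := by
      intro n
      induction n with
      | zero => rw [show -α + (α-1)/2^0 = (-1:ℝ) by rw [pow_zero, div_one]; ring]
      | succ n ih =>
          have h1n : (1:ℝ) ≤ 2^n := one_le_pow₀ one_le_two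
          have hle : (α-1)/2^n ≤ α - 1 := div_le_self (by linarith) h1n
          rw [ih, stepL (-α + (α-1)/2^n) (by linarith)]
          congr 1
          rw [show ((-α + (α-1)/2^n) - α)/2 = -α + (α-1)/2^(n+1) by ring]
    have hAnti : Antitone (fun n : ℕ => Set.Iio (-α + (α-1)/2^n)) := by
      intro a b hab x hx
      simp only [Set.mem_Iio] at hx ⊢
      have h1 : (2:ℝ)^a ≤ 2^b := pow_le_pow_right₀ one_le_two hab
      have h2 : (α-1)/2^b ≤ (α-1)/2^a :=
        div_le_div_of_nonneg_left (by linarith) (by positivity) h1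
      linarith
    have hint : (⋂ n : ℕ, Set.Iio (-α + (α-1)/2^n)) = Set.Iic (-α) := by
      ext x
      simp only [Set.mem_iInter, Set.mem_Iio, Set.mem_Iic]
      constructor
      · intro hx
        by_contra hlt
        push_neg at hlt
        obtain ⟨n, hn⟩ := hsmall (show (0:ℝ) < α - 1 by linarith) (show (0:ℝ) < x + α by linarith)
        have := hx n
        linarith
      · intro hx n
        have : (0:ℝ) < (α-1)/2^n := div_pos (by linarith) (by positivity)
        linarith
    have htd := tendsto_measure_iInter_atTop (μ := μ)
      (fun n => measurableSet_Iio.nullMeasurableSet) hAnti ⟨0, measure_ne_top μ _⟩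
    rw [hint] at htd
    have hconst : (μ ∘ fun n : ℕ => Set.Iio (-α + (α-1)/2^n)) = fun _ => μ (Set.Iio (-1:ℝ)) :=
      funext fun n => (iter2 n).symm
    rw [hconst, hIicA0] at htd
    exact tendsto_nhds_unique tendsto_const_nhds htd
  have hnullout : μ ((Set.Ioo (-1:ℝ) 1)ᶜ) = 0 := by
    have hcompl : (Set.Ioo (-1:ℝ) 1)ᶜ = Set.Iic (-1) ∪ Set.Ici 1 := by
      ext x
      simp only [Set.mem_compl_iff, Set.mem_Ioo, Set.mem_union, Set.mem_Iic, Set.mem_Ici, not_and,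
        not_lt]
      constructor
      · intro h
        rcases le_or_gt x (-1) with h1 | h1
        · exact Or.inl h1
        · exact Or.inr (h h1)
      · intro h h1
        rcases h with h | h
        · linarith
        · exact h
    rw [hcompl]
    have h1 : μ (Set.Iic (-1:ℝ)) = 0 := by
      have : Set.Iic (-1:ℝ) ⊆ Set.Iio (-1) ∪ {(-1:ℝ)} := by
        intro x hx
        rcases eq_or_lt_of_le (Set.mem_Iic.mp hx) with h | h
        · exact Or.inr (by simp [h])
        · exact Or.inl h
      refine le_antisymm (le_trans (measure_mono this) ?_) zero_le
      refine le_trans (measure_union_le _ _) ?_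
      rw [hIio1, hsing (-1), add_zero]
    have h2 : μ (Set.Ici (1:ℝ)) = 0 := by
      have : Set.Ici (1:ℝ) ⊆ {(1:ℝ)} ∪ Set.Ioi 1 := by
        intro x hx
        rcases eq_or_lt_of_le (Set.mem_Ici.mp hx) with h | h
        · exact Or.inl (by simp [h.symm])
        · exact Or.inr h
      refine le_antisymm (le_trans (measure_mono this) ?_) zero_le
      refine le_trans (measure_union_le _ _) ?_
      rw [hIoi1, hsing 1, add_zero]
    refine le_antisymm (le_trans (measure_union_le _ _) ?_) zero_le
    rw [h1, h2, add_zero]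
  -- the Fourier coefficients of μ on the circle ℝ/αℤ
  have hπm : Measurable (fun x : ℝ => (x : AddCircle α)) := AddCircle.measurable_mk'
  have hπc : Continuous (fun x : ℝ => (x : AddCircle α)) := AddCircle.continuous_mk' α
  set c : ℤ → ℂ := fun n => ∫ x, fourier n ((x : ℝ) : AddCircle α) ∂μ with hcdef
  have hcoe2 : ∀ (j : Bool) (x : ℝ),
      ((randSymDoubling α j x : ℝ) : AddCircle α) = ((2*x : ℝ) : AddCircle α) := by
    intro j x
    have hadd : ((2*x + α : ℝ) : AddCircle α) = ((2*x:ℝ) : AddCircle α) := by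
      rw [AddCircle.coe_add, AddCircle.coe_period, add_zero]
    have hsub : ((2*x - α : ℝ) : AddCircle α) = ((2*x:ℝ) : AddCircle α) := by
      rw [AddCircle.coe_sub, AddCircle.coe_period, sub_zero]
    cases j <;> simp only [randSymDoubling] <;> split_ifs <;> simp [hadd, hsub]
  have hfour2 : ∀ (n : ℤ) (x : ℝ),
      fourier n (((2*x : ℝ) : AddCircle α)) = fourier (2*n) ((x : ℝ) : AddCircle α) := by
    intro n x
    rw [fourier_coe_apply, fourier_coe_apply]
    congr 1
    push_cast
    ring
  have hmeq : μ = ENNReal.ofReal p • Measure.map (randSymDoubling α false) μ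
      + ENNReal.ofReal (1-p) • Measure.map (randSymDoubling α true) μ := by
    ext B hB
    rw [Measure.add_apply, Measure.smul_apply, Measure.smul_apply, smul_eq_mul, smul_eq_mul,
      Measure.map_apply hT0m hB, Measure.map_apply hT1m hB]
    exact hstat B hB
  have hgint : ∀ (n : ℤ) (ν : Measure ℝ), IsFiniteMeasure ν →
      Integrable (fun x => fourier n ((x:ℝ) : AddCircle α)) ν := by
    intro n ν hν
    haveI := hν
    refine ⟨((fourier n).continuous.comp hπc).aestronglyMeasurable, ?_⟩
    exact HasFiniteIntegral.of_bounded (C := 1)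
      (Eventually.of_forall fun x => le_of_eq (Circle.norm_coe _))
  haveI hfin0 : IsFiniteMeasure (Measure.map (randSymDoubling α false) μ) := by
    constructor
    rw [Measure.map_apply hT0m MeasurableSet.univ]
    exact measure_lt_top μ _
  haveI hfin1 : IsFiniteMeasure (Measure.map (randSymDoubling α true) μ) := by
    constructor
    rw [Measure.map_apply hT1m MeasurableSet.univ]
    exact measure_lt_top μ _
  haveI hfin0' : IsFiniteMeasure (ENNReal.ofReal p • Measure.map (randSymDoubling α false) μ) := by
    constructor
    rw [Measure.smul_apply, smul_eq_mul]
    exact ENNReal.mul_lt_top ENNReal.ofReal_lt_top (measure_lt_top _ _)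
  haveI hfin1' : IsFiniteMeasure (ENNReal.ofReal (1-p) • Measure.map (randSymDoubling α true) μ) := by
    constructor
    rw [Measure.smul_apply, smul_eq_mul]
    exact ENNReal.mul_lt_top ENNReal.ofReal_lt_top (measure_lt_top _ _)
  have hrec : ∀ n : ℤ, c n = c (2*n) := by
    intro n
    have hsm : ∀ ν : Measure ℝ, AEStronglyMeasurable
        (fun y : ℝ => fourier n ((y:ℝ) : AddCircle α)) ν := fun ν =>
      (((fourier n).continuous.comp hπc).aestronglyMeasurable :)
    have e0 : ∫ x, fourier n ((x:ℝ) : AddCircle α) ∂(Measure.map (randSymDoubling α false) μ)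
        = c (2*n) := by
      rw [integral_map hT0m.aemeasurable (hsm _)]
      rw [hcdef]
      apply integral_congr_ae
      apply Eventually.of_forall
      intro x
      show fourier n ((randSymDoubling α false x : ℝ) : AddCircle α)
        = fourier (2*n) ((x : ℝ) : AddCircle α)
      rw [hcoe2 false x, hfour2 n x]
    have e1 : ∫ x, fourier n ((x:ℝ) : AddCircle α) ∂(Measure.map (randSymDoubling α true) μ)
        = c (2*n) := by
      rw [integral_map hT1m.aemeasurable (hsm _)]
      rw [hcdef]
      apply integral_congr_ae
      apply Eventually.of_forall
      intro x
      show fourier n ((randSymDoubling α true x : ℝ) : AddCircle α)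
        = fourier (2*n) ((x : ℝ) : AddCircle α)
      rw [hcoe2 true x, hfour2 n x]
    calc c n = ∫ x, fourier n ((x:ℝ) : AddCircle α)
          ∂(ENNReal.ofReal p • Measure.map (randSymDoubling α false) μ
            + ENNReal.ofReal (1-p) • Measure.map (randSymDoubling α true) μ) := by
            rw [hcdef, ← hmeq]
      _ = (∫ x, fourier n ((x:ℝ) : AddCircle α)
            ∂(ENNReal.ofReal p • Measure.map (randSymDoubling α false) μ))
          + ∫ x, fourier n ((x:ℝ) : AddCircle α)
            ∂(ENNReal.ofReal (1-p) • Measure.map (randSymDoubling α true) μ) :=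
            integral_add_measure (hgint n _ inferInstance) (hgint n _ inferInstance)
      _ = p • (∫ x, fourier n ((x:ℝ) : AddCircle α) ∂(Measure.map (randSymDoubling α false) μ))
          + (1-p) • ∫ x, fourier n ((x:ℝ) : AddCircle α) ∂(Measure.map (randSymDoubling α true) μ) := by
            rw [integral_smul_measure, integral_smul_measure,
              ENNReal.toReal_ofReal hp0.le, ENNReal.toReal_ofReal (by linarith : (0:ℝ) ≤ 1-p)]
      _ = p • c (2*n) + (1-p) • c (2*n) := by rw [e0, e1]
      _ = c (2*n) := by
            rw [← add_smul]
            norm_num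
  have hpow : ∀ (n : ℤ) (k : ℕ), c n = c (2^k * n) := by
    intro n k
    induction k with
    | zero => norm_num
    | succ k ih =>
        rw [ih, hrec (2^k * n), show (2:ℤ)^(k+1) * n = 2 * (2^k * n) by ring]
  have hcF : ∀ mm : ℤ, c mm = FourierTransform.fourier (fun x => (f x : ℂ)) (-(mm/α)) := by
    intro mm
    have hFT : FourierTransform.fourier (fun x => (f x : ℂ)) (-(mm/α))
        = ∫ x : ℝ, Complex.exp (2*Real.pi*Complex.I*mm*x/α) * (f x : ℂ) ∂volume := by
      rw [Real.fourier_real_eq_integral_exp_smul]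
      congr 1
      ext x
      rw [smul_eq_mul]
      congr 2
      push_cast
      field_simp
    have h1 : (fun x => ENNReal.ofReal (f x)) = fun x => ((Real.toNNReal (f x) : ℝ≥0) : ℝ≥0∞) := rfl
    have hmae : AEMeasurable (fun x => Real.toNNReal (f x)) volume :=
      measurable_real_toNNReal.comp_aemeasurable hfint.aemeasurable
    rw [hFT, hcdef]
    calc (∫ x, fourier mm ((x:ℝ) : AddCircle α) ∂μ)
        = ∫ x, Real.toNNReal (f x) • fourier mm ((x:ℝ) : AddCircle α) ∂volume := by
          rw [hμd, h1, integral_withDensity_eq_integral_smul₀ hmae]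
      _ = ∫ x : ℝ, Complex.exp (2*Real.pi*Complex.I*mm*x/α) * (f x : ℂ) ∂volume := by
          apply integral_congr_ae
          filter_upwards [hf0] with x hx
          rw [NNReal.smul_def, Real.coe_toNNReal _ hx, Complex.real_smul, fourier_coe_apply]
          ring
  have hzero : ∀ n : ℤ, n ≠ 0 → c n = 0 := by
    intro n hn
    have hRL := Real.zero_at_infty_fourier (fun x => (f x : ℂ))
    rcases hn.lt_or_gt with hneg | hpos
    · have htend : Tendsto (fun k : ℕ => -(((2^k * n : ℤ):ℝ)/α)) atTop (cocompact ℝ) := by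
        rw [cocompact_eq_atBot_atTop]
        apply Tendsto.mono_right _ le_sup_right
        have h1 : Tendsto (fun k : ℕ => (2:ℝ)^k) atTop atTop :=
          tendsto_pow_atTop_atTop_of_one_lt one_lt_two
        have hnn : (0:ℝ) < (-n:ℝ)/α := by
          apply div_pos _ hα0
          exact_mod_cast neg_pos.mpr hneg
        have h2 := h1.atTop_mul_const hnn
        refine h2.congr fun k => ?_
        push_cast
        ring
      have hconst : Tendsto (fun k : ℕ => FourierTransform.fourier (fun x => (f x : ℂ))
          (-(((2^k * n : ℤ):ℝ)/α))) atTop (nhds 0) := hRL.comp htend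
      have heq : (fun k : ℕ => FourierTransform.fourier (fun x => (f x : ℂ))
          (-(((2^k * n : ℤ):ℝ)/α))) = fun _ => c n := by
        funext k
        rw [← hcF (2^k * n), ← hpow n k]
      rw [heq] at hconst
      exact tendsto_nhds_unique tendsto_const_nhds hconst
    · have htend : Tendsto (fun k : ℕ => -(((2^k * n : ℤ):ℝ)/α)) atTop (cocompact ℝ) := by
        rw [cocompact_eq_atBot_atTop]
        apply Tendsto.mono_right _ le_sup_left
        have h1 : Tendsto (fun k : ℕ => (2:ℝ)^k) atTop atTop :=
          tendsto_pow_atTop_atTop_of_one_lt one_lt_two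
        have hnn : (0:ℝ) < (n:ℝ)/α := by
          apply div_pos _ hα0
          exact_mod_cast hpos
        have h2 := (h1.atTop_mul_const hnn)
        have h3 : Tendsto (fun k : ℕ => ((2^k * n : ℤ):ℝ)/α) atTop atTop := by
          refine h2.congr fun k => ?_
          push_cast
          ring
        exact tendsto_neg_atTop_atBot.comp h3
      have hconst : Tendsto (fun k : ℕ => FourierTransform.fourier (fun x => (f x : ℂ))
          (-(((2^k * n : ℤ):ℝ)/α))) atTop (nhds 0) := hRL.comp htend
      have heq : (fun k : ℕ => FourierTransform.fourier (fun x => (f x : ℂ))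
          (-(((2^k * n : ℤ):ℝ)/α))) = fun _ => c n := by
        funext k
        rw [← hcF (2^k * n), ← hpow n k]
      rw [heq] at hconst
      exact tendsto_nhds_unique tendsto_const_nhds hconst
  -- the pushforward measure on the circle is the (normalised) Haar measure
  haveI hρprob : IsProbabilityMeasure (Measure.map (fun x : ℝ => (x : AddCircle α)) μ) :=
    Measure.isProbabilityMeasure_map hπm.aemeasurable
  have hCint : ∀ (ν : Measure (AddCircle α)), IsFiniteMeasure ν →
      ∀ φ : C(AddCircle α, ℂ), Integrable (fun y => φ y) ν := by
    intro ν hν φ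
    haveI := hν
    exact ⟨φ.continuous.aestronglyMeasurable,
      HasFiniteIntegral.of_bounded (C := ‖φ‖)
        (Eventually.of_forall fun y => φ.norm_coe_le_norm y)⟩
  have hLcont : ∀ (ν : Measure (AddCircle α)), IsProbabilityMeasure ν →
      Continuous (fun φ : C(AddCircle α, ℂ) => ∫ y, φ y ∂ν) := by
    intro ν hν
    haveI := hν
    refine LipschitzWith.continuous (LipschitzWith.of_dist_le_mul (K := 1) fun φ ψ => ?_)
    rw [dist_eq_norm, ← integral_sub (hCint ν inferInstance φ) (hCint ν inferInstance ψ)]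
    calc ‖∫ y, (φ y - ψ y) ∂ν‖ ≤ dist φ ψ * (ν Set.univ).toReal := by
          apply norm_integral_le_of_norm_le_const
          exact Eventually.of_forall fun y => by
            rw [← dist_eq_norm]
            exact ContinuousMap.dist_apply_le_dist y
      _ = 1 * dist φ ψ := by rw [measure_univ]; simp [mul_comm]
  have hρfour : ∀ n : ℤ,
      ∫ y, fourier n y ∂(Measure.map (fun x : ℝ => (x : AddCircle α)) μ) = c n := by
    intro n
    rw [integral_map hπm.aemeasurable (fourier n).continuous.aestronglyMeasurable, hcdef]
  have hhaarzero : ∀ n : ℤ, n ≠ 0 →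
      ∫ y, fourier n y ∂(@AddCircle.haarAddCircle α _) = 0 := fun n hn =>
    integral_eq_zero_of_add_right_eq_neg (fourier_add_half_inv_index hn hα0)
  have hprob1 : ∀ (ν : Measure (AddCircle α)), IsProbabilityMeasure ν →
      ∫ y, (fourier 0 : C(AddCircle α, ℂ)) y ∂ν = 1 := by
    intro ν hν
    haveI := hν
    rw [show ⇑(fourier (T := α) 0) = fun _ => (1:ℂ) from funext fun y => fourier_zero]
    simp
  have hdense : Dense ((Submodule.span ℂ (Set.range (@fourier α)) :
      Submodule ℂ C(AddCircle α, ℂ)) : Set C(AddCircle α, ℂ)) := by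
    rw [dense_iff_closure_eq, ← Submodule.topologicalClosure_coe, span_fourier_closure_eq_top]
    rfl
  have hstar : ∀ φ : C(AddCircle α, ℂ),
      ∫ y, φ y ∂(Measure.map (fun x : ℝ => (x : AddCircle α)) μ)
        = ∫ y, φ y ∂(@AddCircle.haarAddCircle α _) := by
    have heqOn : Set.EqOn
        (fun φ : C(AddCircle α, ℂ) => ∫ y, φ y ∂(Measure.map (fun x : ℝ => (x : AddCircle α)) μ))
        (fun φ : C(AddCircle α, ℂ) => ∫ y, φ y ∂(@AddCircle.haarAddCircle α _))
        ((Submodule.span ℂ (Set.range (@fourier α)) :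
          Submodule ℂ C(AddCircle α, ℂ)) : Set C(AddCircle α, ℂ)) := by
      intro φ hφ
      induction hφ using Submodule.span_induction with
      | mem z hz =>
          obtain ⟨n, rfl⟩ := hz
          by_cases hn : n = 0
          · subst hn
            show ∫ y, (fourier 0 : C(AddCircle α, ℂ)) y ∂_ = ∫ y, (fourier 0 : C(AddCircle α, ℂ)) y ∂_
            rw [hprob1 _ inferInstance, hprob1 _ inferInstance]
          · show ∫ y, fourier n y ∂_ = ∫ y, fourier n y ∂_
            rw [hρfour n, hzero n hn, hhaarzero n hn]
      | zero => simp
      | add u v hu hv ihu ihv =>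
          show ∫ y, (u + v) y ∂_ = ∫ y, (u + v) y ∂_
          simp only [ContinuousMap.coe_add, Pi.add_apply]
          rw [integral_add (hCint _ inferInstance u) (hCint _ inferInstance v),
            integral_add (hCint _ inferInstance u) (hCint _ inferInstance v)]
          exact congrArg₂ (· + ·) ihu ihv
      | smul a u hu ihu =>
          show ∫ y, (a • u) y ∂_ = ∫ y, (a • u) y ∂_
          simp only [ContinuousMap.coe_smul, Pi.smul_apply, smul_eq_mul]
          rw [integral_const_mul, integral_const_mul]
          exact congrArg (fun z => a * z) ihu
    have := Continuous.ext_on hdense (hLcont _ inferInstance) (hLcont _ inferInstance) heqOn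
    exact fun φ => congrFun this φ
  have hρ : Measure.map (fun x : ℝ => (x : AddCircle α)) μ = @AddCircle.haarAddCircle α _ := by
    apply ext_of_forall_lintegral_eq_of_IsFiniteMeasure
    intro g
    have key : ∀ (ν : Measure (AddCircle α)), IsFiniteMeasure ν →
        ∫⁻ y, (g y : ℝ≥0∞) ∂ν = ENNReal.ofReal (∫ y, (g y : ℝ) ∂ν) := by
      intro ν hν
      haveI := hν
      rw [← BoundedContinuousFunction.toReal_lintegral_coe_eq_integral g ν,
        ENNReal.ofReal_toReal (g.lintegral_lt_top_of_nnreal ν).ne]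
    rw [key _ inferInstance, key _ inferInstance]
    congr 1
    have hφ := hstar ⟨fun y => ((g y : ℝ) : ℂ),
      Complex.continuous_ofReal.comp (NNReal.continuous_coe.comp g.continuous)⟩
    simp only [ContinuousMap.coe_mk] at hφ
    have h1 : ((∫ y, (g y : ℝ) ∂(Measure.map (fun x : ℝ => (x : AddCircle α)) μ) : ℝ) : ℂ)
        = ((∫ y, (g y : ℝ) ∂(@AddCircle.haarAddCircle α _) : ℝ) : ℂ) :=
      (integral_ofReal.symm.trans hφ).trans integral_ofReal
    exact_mod_cast h1
  -- key identity : μ coincides with Lebesgue/α on the middle interval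
  have hkey : ∀ B : Set ℝ, MeasurableSet B → B ⊆ Set.Ioo (1-α) (α-1) →
      ENNReal.ofReal α * μ B = volume B := by
    intro B hB hBD
    set e := AddCircle.measurableEquivIoc α (-(α/2)) with he
    set C : Set (AddCircle α) := e ⁻¹' (Subtype.val ⁻¹' B) with hCdef
    have hCm : MeasurableSet C := e.measurable (measurable_subtype_coe hB)
    have hmem : ∀ x : ℝ, (((x:ℝ) : AddCircle α) ∈ C) ↔ toIocMod hα0 (-(α/2)) x ∈ B := by
      intro x
      rw [hCdef]
      simp only [Set.mem_preimage]
      rw [show ((e ((x:ℝ) : AddCircle α) : Set.Ioc (-(α/2)) (-(α/2)+α)) : ℝ)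
        = toIocMod hα0 (-(α/2)) x from rfl]
    have hIocB : B ⊆ Set.Ioc (-(α/2)) (-(α/2)+α) := by
      intro y hy
      obtain ⟨h1, h2⟩ := hBD hy
      exact ⟨by linarith, by linarith⟩
    have hsub1 : (fun x : ℝ => (x : AddCircle α)) ⁻¹' C ∩ Set.Ioo (-1:ℝ) 1 = B := by
      ext x
      simp only [Set.mem_inter_iff, Set.mem_preimage, Set.mem_Ioo]
      constructor
      · rintro ⟨hxC, hx1, hx2⟩
        rw [hmem x] at hxC
        obtain ⟨hr1, hr2⟩ := hBD hxC
        have hdiff : x - toIocMod hα0 (-(α/2)) x = toIocDiv hα0 (-(α/2)) x • α :=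
          self_sub_toIocMod hα0 (-(α/2)) x
        rw [zsmul_eq_mul] at hdiff
        set k := toIocDiv hα0 (-(α/2)) x with hkdef
        have hk1 : (k:ℝ) < 1 := by nlinarith
        have hk2 : (-1:ℝ) < (k:ℝ) := by nlinarith
        have hk0 : k = 0 := by
          have b1 : k < 1 := by exact_mod_cast hk1
          have b2 : -1 < k := by exact_mod_cast hk2
          omega
        rw [hk0] at hdiff
        push_cast at hdiff
        rw [zero_mul, sub_eq_zero] at hdiff
        rw [hdiff]
        exact hxC
      · intro hxB
        obtain ⟨h1, h2⟩ := hBD hxB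
        refine ⟨?_, by linarith, by linarith⟩
        rw [hmem x, (toIocMod_eq_self hα0).mpr (hIocB hxB)]
        exact hxB
    have hsub2 : (fun x : ℝ => (x : AddCircle α)) ⁻¹' C ∩ Set.Ioc (-(α/2)) (-(α/2)+α) = B := by
      ext x
      simp only [Set.mem_inter_iff, Set.mem_preimage]
      constructor
      · rintro ⟨hxC, hxIoc⟩
        rw [hmem x, (toIocMod_eq_self hα0).mpr hxIoc] at hxC
        exact hxC
      · intro hxB
        refine ⟨?_, hIocB hxB⟩
        rw [hmem x, (toIocMod_eq_self hα0).mpr (hIocB hxB)]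
        exact hxB
    have hpre : μ ((fun x : ℝ => (x : AddCircle α)) ⁻¹' C) = μ B := by
      have hsplit := measure_inter_add_diff (μ := μ)
        ((fun x : ℝ => (x : AddCircle α)) ⁻¹' C) (measurableSet_Ioo (a := (-1:ℝ)) (b := 1))
      rw [hsub1] at hsplit
      have hd0 : μ ((fun x : ℝ => (x : AddCircle α)) ⁻¹' C \ Set.Ioo (-1:ℝ) 1) = 0 :=
        measure_mono_null (fun x hx => hx.2) hnullout
      rw [hd0, add_zero] at hsplit
      exact hsplit.symm
    have hμB : μ B = (@AddCircle.haarAddCircle α _) C := by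
      have h1 : (Measure.map (fun x : ℝ => (x : AddCircle α)) μ) C
          = μ ((fun x : ℝ => (x : AddCircle α)) ⁻¹' C) := Measure.map_apply hπm hCm
      rw [hρ] at h1
      exact hpre.symm.trans h1.symm
    have hvolB : volume B = ENNReal.ofReal α * (@AddCircle.haarAddCircle α _) C := by
      have hmp := (AddCircle.measurePreserving_mk α (-(α/2))).map_eq
      have h2 : (volume : Measure (AddCircle α)) C = volume B := by
        rw [← hmp, Measure.map_apply hπm hCm, Measure.restrict_apply (hπm hCm), hsub2]
      rw [← h2, AddCircle.volume_eq_smul_haarAddCircle, Measure.smul_apply, smul_eq_mul]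
    rw [hμB, ← hvolB]
  -- conclude : f = 1/α a.e. on the middle interval
  have hDfin : volume (Set.Ioo (1-α) (α-1)) < ⊤ := by
    rw [Real.volume_Ioo]
    exact ENNReal.ofReal_lt_top
  haveI hfinD : IsFiniteMeasure (volume.restrict (Set.Ioo (1-α) (α-1))) := by
    constructor
    rw [Measure.restrict_apply_univ]
    exact hDfin
  have hmain : f =ᵐ[volume.restrict (Set.Ioo (1-α) (α-1))] fun _ => 1/α := by
    apply ae_eq_of_forall_setIntegral_eq_of_sigmaFinite
    · intro s hs hsfin
      exact (hfint.restrict (s := Set.Ioo (1-α) (α-1))).integrableOn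
    · intro s hs hsfin
      exact (integrable_const _).integrableOn
    · intro s hs hsfin
      rw [Measure.restrict_restrict hs]
      have hmeas : MeasurableSet (s ∩ Set.Ioo (1-α) (α-1)) := hs.inter measurableSet_Ioo
      have hk := hkey (s ∩ Set.Ioo (1-α) (α-1)) hmeas Set.inter_subset_right
      rw [hdens _ hmeas] at hk
      have hnn : 0 ≤ ∫ x in (s ∩ Set.Ioo (1-α) (α-1)), f x ∂volume :=
        integral_nonneg_of_ae (ae_restrict_of_ae hf0)
      have htr : α * ∫ x in (s ∩ Set.Ioo (1-α) (α-1)), f x ∂volume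
          = (volume (s ∩ Set.Ioo (1-α) (α-1))).toReal := by
        have h2 := congrArg ENNReal.toReal hk
        rwa [← ENNReal.ofReal_mul hα0.le, ENNReal.toReal_ofReal (mul_nonneg hα0.le hnn)] at h2
      rw [setIntegral_const, smul_eq_mul]
      rw [show ∫ x in (s ∩ Set.Ioo (1-α) (α-1)), f x ∂volume
          = (volume (s ∩ Set.Ioo (1-α) (α-1))).toReal / α by
        rw [eq_div_iff (ne_of_gt hα0)]; linarith [htr]]
      simp only [measureReal_def]
      ring
  have hIccIoo : volume.restrict (Set.Icc (1-α) (α-1))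
      = volume.restrict (Set.Ioo (1-α) (α-1)) :=
    (Measure.restrict_congr_set Ioo_ae_eq_Icc).symm
  rw [hIccIoo]
  exact hmain
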